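/- Let n ≥ 1 and r ∈ (0,1). Let T_n be the n×n lower-triangular Toeplitz matrix defined by (T_n)_{ij} = 0 for i < j, (T_n)_{ii} = −r, and (T_n)_{ij} = (1−r²)·r^{i−j−1} for i > j. Then ‖T_n‖ ≤ 1, the spectrum of T_n equals {−r}, and ‖(−I − T_n)^{-1}‖ ≥ (n(1+r) + 1 − r)/(2(1−r)). -/

import Mathlib

open Finset

/-- The operator norm of a complex `n × n` matrix induced by the Euclidean norm on `ℂⁿ`. -/
noncomputable def matNorm {n : ℕ} (T : Matrix (Fin n) (Fin n) ℂ) : ℝ :=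
  ‖Matrix.toEuclideanCLM (𝕜 := ℂ) T‖

/-- The `n × n` lower-triangular Toeplitz matrix with `-r` on the diagonal and
`(1 - r²)·r^(i - j - 1)` below the diagonal. -/
noncomputable def Tmat (n : ℕ) (r : ℝ) : Matrix (Fin n) (Fin n) ℂ :=
  Matrix.of fun i j =>
    if (i : ℕ) < (j : ℕ) then 0
    else if (i : ℕ) = (j : ℕ) then (-r : ℂ)
    else ((1 : ℂ) - (r : ℂ) ^ 2) * (r : ℂ) ^ ((i : ℕ) - (j : ℕ) - 1)

namespace Stmt9Aux

def pad {n : ℕ} (x : Fin n → ℂ) : ℕ → ℂ := fun m => if h : m < n then x ⟨m, h⟩ else 0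

lemma pad_coe {n : ℕ} (x : Fin n → ℂ) (i : Fin n) : pad x i = x i := by
  simp [pad, i.2]

lemma mulVec_Tmat {n : ℕ} (r : ℝ) (x : Fin n → ℂ) (i : Fin n) :
    (Tmat n r).mulVec x i = -(r:ℂ) * x i +
      ((1:ℂ) - (r:ℂ)^2) * ∑ j ∈ Finset.range i, (r:ℂ)^((i:ℕ)-j-1) * pad x j := by
  have hF : ∀ k : Fin n, Tmat n r i k * x k =
      (fun m => (if (i:ℕ) < m then 0 else if (i:ℕ) = m then -(r:ℂ)
        else ((1:ℂ)-(r:ℂ)^2) * (r:ℂ)^((i:ℕ)-m-1)) * pad x m) (k : ℕ) := by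
    intro k
    simp [Tmat, pad_coe]
  rw [Matrix.mulVec, dotProduct]
  calc (∑ k : Fin n, Tmat n r i k * x k)
      = ∑ m ∈ Finset.range n, (fun m => (if (i:ℕ) < m then 0 else if (i:ℕ) = m then -(r:ℂ)
        else ((1:ℂ)-(r:ℂ)^2) * (r:ℂ)^((i:ℕ)-m-1)) * pad x m) m := by
        rw [← Fin.sum_univ_eq_sum_range]
        exact Finset.sum_congr rfl fun k _ => hF k
    _ = ∑ m ∈ Finset.range ((i:ℕ)+1), (fun m => (if (i:ℕ) < m then 0 else if (i:ℕ) = m then -(r:ℂ)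
        else ((1:ℂ)-(r:ℂ)^2) * (r:ℂ)^((i:ℕ)-m-1)) * pad x m) m := by
        refine (Finset.sum_subset ?_ ?_).symm
        · exact Finset.range_subset_range.2 i.2
        · intro m _ hm
          simp only [Finset.mem_range, not_lt] at hm
          simp [Nat.lt_of_succ_le hm]
    _ = -(r:ℂ) * x i + ((1:ℂ) - (r:ℂ)^2) * ∑ j ∈ Finset.range i, (r:ℂ)^((i:ℕ)-j-1) * pad x j := by
        rw [Finset.sum_range_succ]
        simp only [lt_irrefl, if_false, if_pos rfl, pad_coe]
        rw [Finset.mul_sum]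
        rw [add_comm]
        congr 1
        refine Finset.sum_congr rfl fun j hj => ?_
        rw [Finset.mem_range] at hj
        simp [Nat.not_lt.2 hj.le, hj.ne', mul_assoc]

section TelAux
variable (R : ℂ) (u : ℕ → ℂ)

noncomputable def Yf : ℕ → ℂ := fun m => ∑ j ∈ Finset.range (m+1), R^(m-j) * u j
noncomputable def Wf : ℕ → ℂ := fun m => if m = 0 then 0 else Yf R u (m-1)

lemma Yf_succ (m : ℕ) : Yf R u (m+1) = R * Yf R u m + u (m+1) := by
  unfold Yf
  rw [Finset.sum_range_succ]
  simp only [Nat.sub_self, pow_zero, one_mul]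
  congr 1
  rw [Finset.mul_sum]
  refine Finset.sum_congr rfl fun j hj => ?_
  rw [Finset.mem_range] at hj
  have : m + 1 - j = (m - j) + 1 := by omega
  rw [this, pow_succ]
  ring

lemma u_eq (m : ℕ) : u m = Yf R u m - R * Wf R u m := by
  cases m with
  | zero => simp [Yf, Wf]
  | succ k =>
    simp only [Wf, Nat.succ_ne_zero, if_false, Nat.add_sub_cancel]
    rw [Yf_succ]; ring

lemma sum_tel (m : ℕ) : ∑ j ∈ Finset.range m, R^(m-j-1) * u j = Wf R u m := by
  induction m with
  | zero => simp [Wf]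
  | succ k ih =>
    rw [Finset.sum_range_succ]
    have h1 : ∑ j ∈ Finset.range k, R^(k+1-j-1) * u j
        = R * ∑ j ∈ Finset.range k, R^(k-j-1) * u j := by
      rw [Finset.mul_sum]
      refine Finset.sum_congr rfl fun j hj => ?_
      rw [Finset.mem_range] at hj
      cases k with
      | zero => omega
      | succ l =>
        have h2 : l + 1 + 1 - j - 1 = (l + 1 - j - 1) + 1 := by omega
        rw [h2, pow_succ]; ring
    rw [h1, ih]
    have h3 : k + 1 - k - 1 = 0 := by omega
    rw [h3, pow_zero, one_mul, u_eq R u k]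
    simp only [Wf, Nat.succ_ne_zero, if_false, Nat.add_sub_cancel]
    ring

end TelAux

noncomputable def zfun (r : ℝ) : ℕ → ℂ := fun m => (-1)^m * ((1+(r:ℂ))*(m+1) - (r:ℂ))

lemma sum_z (r : ℝ) (i : ℕ) :
    ∑ j ∈ Finset.range i, (r:ℂ)^(i-j-1) * zfun r j = (-1)^(i+1) * i := by
  induction i with
  | zero => simp
  | succ k ih =>
    rw [Finset.sum_range_succ]
    have h1 : ∑ j ∈ Finset.range k, (r:ℂ)^(k+1-j-1) * zfun r j
        = (r:ℂ) * ∑ j ∈ Finset.range k, (r:ℂ)^(k-j-1) * zfun r j := by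
      rw [Finset.mul_sum]
      refine Finset.sum_congr rfl fun j hj => ?_
      rw [Finset.mem_range] at hj
      have h2 : k + 1 - j - 1 = (k - j - 1) + 1 := by omega
      rw [h2, pow_succ]; ring
    have h3 : k + 1 - k - 1 = 0 := by omega
    rw [h1, ih, h3, pow_zero, one_mul]
    unfold zfun
    push_cast
    ring

lemma sum_sq_closed (r : ℝ) (n : ℕ) :
    6 * ∑ i ∈ Finset.range n, ((1+r)*(i+1) - r)^2
      = (1+r)^2 * (n*(n+1)*(2*n+1)) - 6*(1+r)*r*(n*(n+1)) + 6*n*r^2 := by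
  induction n with
  | zero => simp
  | succ k ih =>
    rw [Finset.sum_range_succ, mul_add, ih]
    push_cast
    ring

lemma sq_ineq (r : ℝ) (hr0 : 0 < r) (hr1 : r < 1) (n : ℕ) (hn : 1 ≤ n) :
    (n:ℝ) * ((n:ℝ)*(1+r)+1-r)^2 ≤ 4 * ∑ i ∈ Finset.range n, ((1+r)*(i+1) - r)^2 := by
  have h := sum_sq_closed r n
  have hn' : (1:ℝ) ≤ (n:ℝ) := by exact_mod_cast hn
  nlinarith [mul_nonneg (mul_nonneg (sq_nonneg (1+r))
      (mul_nonneg (by positivity : (0:ℝ) ≤ (n:ℝ)) (by positivity : (0:ℝ) ≤ (n:ℝ)+1)))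
      (by linarith : (0:ℝ) ≤ (n:ℝ)-1),
    mul_nonneg (mul_nonneg (le_of_lt hr0) (by linarith : (0:ℝ) ≤ 1+r))
      (mul_nonneg (by positivity : (0:ℝ) ≤ (n:ℝ)) (by positivity : (0:ℝ) ≤ (n:ℝ)+1))]

lemma key_sq (r : ℝ) (a b : ℂ) :
    ‖a - (r:ℂ)*b‖^2 - ‖b - (r:ℂ)*a‖^2 = (1-r^2)*(‖a‖^2 - ‖b‖^2) := by
  simp only [Complex.sq_norm, Complex.normSq_apply, Complex.sub_re,
    Complex.sub_im, Complex.mul_re, Complex.mul_im, Complex.ofReal_re, Complex.ofReal_im]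
  ring

lemma Tmat_diag {n : ℕ} (r : ℝ) (i : Fin n) : Tmat n r i i = -(r:ℂ) := by
  simp [Tmat]

lemma Tmat_upper {n : ℕ} (r : ℝ) {i j : Fin n} (h : i < j) : Tmat n r i j = 0 := by
  have h' : (i:ℕ) < (j:ℕ) := h
  simp only [Tmat, Matrix.of_apply, if_pos h']

lemma det_smul_sub {n : ℕ} (r : ℝ) (μ : ℂ) :
    (μ • (1 : Matrix (Fin n) (Fin n) ℂ) - Tmat n r).det = (μ + r)^n := by
  rw [Matrix.det_of_lowerTriangular]
  · simp [Tmat_diag, sub_neg_eq_add]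
  · intro i j h
    simp only [OrderDual.toDual_lt_toDual] at h
    simp [Matrix.sub_apply, Matrix.smul_apply, Matrix.one_apply_ne (ne_of_lt h), Tmat_upper r h]

lemma spectrum_Tmat (n : ℕ) (hn : 1 ≤ n) (r : ℝ) :
    spectrum ℂ (Tmat n r) = {(-r : ℂ)} := by
  ext μ
  rw [Set.mem_singleton_iff, spectrum.mem_iff]
  have halg : algebraMap ℂ (Matrix (Fin n) (Fin n) ℂ) μ = μ • 1 := by
    rw [Algebra.algebraMap_eq_smul_one]
  rw [halg, Matrix.isUnit_iff_isUnit_det, isUnit_iff_ne_zero, not_ne_iff, det_smul_sub,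
    pow_eq_zero_iff (by omega : n ≠ 0)]
  constructor
  · intro h; linear_combination h
  · intro h; rw [h]; ring

lemma isUnit_B (n : ℕ) (hn : 1 ≤ n) (r : ℝ) (hr1 : r < 1) :
    IsUnit (-(1 : Matrix (Fin n) (Fin n) ℂ) - Tmat n r) := by
  rw [Matrix.isUnit_iff_isUnit_det, isUnit_iff_ne_zero]
  have hB : (-(1 : Matrix (Fin n) (Fin n) ℂ) - Tmat n r) = (-1 : ℂ) • 1 - Tmat n r := by
    simp
  rw [hB, det_smul_sub]
  intro h
  have h1 := pow_eq_zero_iff (n := n) (by omega : n ≠ 0) |>.mp h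
  have h2 : (r:ℝ) = 1 := by exact_mod_cast (by linear_combination h1 : (r:ℂ) = 1)
  linarith

lemma norm_Tmat_le (n : ℕ) (r : ℝ) (hr0 : 0 ≤ r) (hr1 : r ≤ 1) :
    matNorm (Tmat n r) ≤ 1 := by
  unfold matNorm
  refine ContinuousLinearMap.opNorm_le_bound _ zero_le_one fun v => ?_
  rw [one_mul]
  set x : Fin n → ℂ := WithLp.equiv 2 _ v with hxdef
  have hv : v = (WithLp.equiv 2 _).symm x := rfl
  set R : ℂ := (r:ℂ) with hR
  set u : ℕ → ℂ := pad x with hu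
  have hxi : ∀ i : Fin n, x i = Yf R u i - R * Wf R u i := fun i => by
    rw [← pad_coe x i]; exact u_eq R u i
  have hmv : ∀ i : Fin n, (Tmat n r).mulVec x i = Wf R u i - R * Yf R u i := by
    intro i
    rw [mulVec_Tmat, sum_tel, hxi i]
    ring
  rw [hv, WithLp.equiv_symm_apply, Matrix.toEuclideanCLM_toLp,
    EuclideanSpace.norm_eq, EuclideanSpace.norm_eq]
  simp only [WithLp.ofLp_toLp]
  apply Real.sqrt_le_sqrt
  have hW : ∑ i ∈ Finset.range n, ‖Wf R u i‖^2 ≤ ∑ i ∈ Finset.range n, ‖Yf R u i‖^2 := by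
    cases n with
    | zero => simp
    | succ m =>
      rw [Finset.sum_range_succ' (fun i => ‖Wf R u i‖^2) m]
      have hW0 : ‖Wf R u 0‖^2 = 0 := by simp [Wf]
      have hWs : ∀ i, ‖Wf R u (i+1)‖^2 = ‖Yf R u i‖^2 := fun i => by simp [Wf]
      rw [hW0, add_zero, Finset.sum_congr rfl fun i _ => hWs i, Finset.sum_range_succ]
      exact le_add_of_nonneg_right (sq_nonneg _)
  have e1 : ∑ i ∈ Finset.range n, ‖Yf R u i - R * Wf R u i‖^2
      - ∑ i ∈ Finset.range n, ‖Wf R u i - R * Yf R u i‖^2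
      = (1-r^2) * (∑ i ∈ Finset.range n, ‖Yf R u i‖^2 - ∑ i ∈ Finset.range n, ‖Wf R u i‖^2) := by
    rw [← Finset.sum_sub_distrib, ← Finset.sum_sub_distrib, Finset.mul_sum]
    exact Finset.sum_congr rfl fun i _ => key_sq r _ _
  have hr2 : (0:ℝ) ≤ 1 - r^2 := by nlinarith
  have hfin : ∑ i ∈ Finset.range n, ‖Wf R u i - R * Yf R u i‖^2
      ≤ ∑ i ∈ Finset.range n, ‖Yf R u i - R * Wf R u i‖^2 := by
    nlinarith [mul_nonneg hr2 (by linarith :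
      (0:ℝ) ≤ ∑ i ∈ Finset.range n, ‖Yf R u i‖^2 - ∑ i ∈ Finset.range n, ‖Wf R u i‖^2)]
  calc ∑ i : Fin n, ‖(Tmat n r).mulVec x i‖^2
      = ∑ i ∈ Finset.range n, ‖Wf R u i - R * Yf R u i‖^2 := by
        rw [← Fin.sum_univ_eq_sum_range (fun m => ‖Wf R u m - R * Yf R u m‖^2) n]
        exact Finset.sum_congr rfl fun i _ => by rw [hmv i]
    _ ≤ ∑ i ∈ Finset.range n, ‖Yf R u i - R * Wf R u i‖^2 := hfin
    _ = ∑ i : Fin n, ‖x i‖^2 := by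
        rw [← Fin.sum_univ_eq_sum_range (fun m => ‖Yf R u m - R * Wf R u m‖^2) n]
        exact Finset.sum_congr rfl fun i _ => by rw [hxi i]

lemma norm_zfun_sq (r : ℝ) (m : ℕ) : ‖zfun r m‖^2 = ((1+r)*(m+1)-r)^2 := by
  have h : zfun r m = (-1:ℂ)^m * ((((1+r)*(m+1) - r : ℝ)):ℂ) := by
    unfold zfun; push_cast; ring
  rw [h, norm_mul, norm_pow, norm_neg, norm_one, one_pow, one_mul, Complex.norm_real,
    Real.norm_eq_abs, sq_abs]


lemma inv_norm_ge (n : ℕ) (hn : 1 ≤ n) (r : ℝ) (hr0 : 0 < r) (hr1 : r < 1) :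
    (n * (1 + r) + 1 - r) / (2 * (1 - r)) ≤
      matNorm (-(1 : Matrix (Fin n) (Fin n) ℂ) - Tmat n r)⁻¹ := by
  set B : Matrix (Fin n) (Fin n) ℂ := -(1 : Matrix (Fin n) (Fin n) ℂ) - Tmat n r with hBdef
  have hu : IsUnit B := isUnit_B n hn r hr1
  have hdet : IsUnit B.det := (Matrix.isUnit_iff_isUnit_det B).mp hu
  set z : Fin n → ℂ := fun i => zfun r i with hz
  set w : Fin n → ℂ := fun i => ((r:ℂ) - 1) * (-1)^(i:ℕ) with hwv
  have hBz : B.mulVec z = w := by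
    funext i
    have hstep : B.mulVec z i = -(z i) - (Tmat n r).mulVec z i := by
      rw [hBdef, Matrix.sub_mulVec, Matrix.neg_mulVec, Matrix.one_mulVec]
      rfl
    rw [hstep, mulVec_Tmat]
    have hpad : ∀ j ∈ Finset.range (i:ℕ),
        (r:ℂ)^((i:ℕ)-j-1) * pad z j = (r:ℂ)^((i:ℕ)-j-1) * zfun r j := by
      intro j hj
      rw [Finset.mem_range] at hj
      have hjn : j < n := lt_trans hj i.2
      simp [pad, hjn, hz]
    rw [Finset.sum_congr rfl hpad, sum_z]
    show -(zfun r i) - (-(r:ℂ) * zfun r i + _) = _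
    unfold zfun
    rw [pow_succ]
    push_cast
    ring
  have hw : B⁻¹.mulVec w = z := by
    rw [← hBz, Matrix.mulVec_mulVec, Matrix.nonsing_inv_mul B hdet, Matrix.one_mulVec]
  have happ : Matrix.toEuclideanCLM (𝕜 := ℂ) B⁻¹ ((WithLp.equiv 2 _).symm w)
      = (WithLp.equiv 2 _).symm z := by
    rw [WithLp.equiv_symm_apply, Matrix.toEuclideanCLM_toLp, hw]
  have hle := (Matrix.toEuclideanCLM (𝕜 := ℂ) B⁻¹).le_opNorm ((WithLp.equiv 2 _).symm w)
  rw [happ] at hle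
  have hznorm : ‖(WithLp.equiv 2 (Fin n → ℂ)).symm z‖^2
      = ∑ i ∈ Finset.range n, ((1+r)*(i+1)-r)^2 := by
    rw [EuclideanSpace.norm_eq, Real.sq_sqrt (by positivity)]
    simp only [WithLp.equiv_symm_apply, WithLp.ofLp_toLp]
    rw [← Fin.sum_univ_eq_sum_range (fun m => ((1+r)*(m+1)-r)^2) n]
    exact Finset.sum_congr rfl fun i _ => norm_zfun_sq r i
  have hwnorm : ‖(WithLp.equiv 2 (Fin n → ℂ)).symm w‖ = (1-r) * Real.sqrt n := by
    rw [EuclideanSpace.norm_eq]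
    simp only [WithLp.equiv_symm_apply, WithLp.ofLp_toLp]
    have hwi : ∀ i : Fin n, ‖w i‖^2 = (1-r)^2 := by
      intro i
      have : w i = (((r - 1 : ℝ)):ℂ) * (-1)^(i:ℕ) := by rw [hwv]; push_cast; ring
      rw [this, norm_mul, norm_pow, norm_neg, norm_one, one_pow, mul_one, Complex.norm_real,
        Real.norm_eq_abs, sq_abs]
      ring
    rw [Finset.sum_congr rfl fun i _ => hwi i, Finset.sum_const, Finset.card_univ,
      Fintype.card_fin, nsmul_eq_mul]
    rw [show (n:ℝ) * (1-r)^2 = ((1-r)*Real.sqrt n)^2 by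
      rw [mul_pow, Real.sq_sqrt (by positivity)]; ring]
    exact Real.sqrt_sq (mul_nonneg (by linarith) (Real.sqrt_nonneg _))
  set N : ℝ := ‖Matrix.toEuclideanCLM (𝕜 := ℂ) B⁻¹‖ with hN
  have hN0 : 0 ≤ N := norm_nonneg _
  have hn' : (1:ℝ) ≤ (n:ℝ) := by exact_mod_cast hn
  have hsq := sq_ineq r hr0 hr1 n hn
  rw [hwnorm] at hle
  have e3 : ‖(WithLp.equiv 2 (Fin n → ℂ)).symm z‖^2 ≤ (N * ((1-r) * Real.sqrt n))^2 :=
    pow_le_pow_left₀ (norm_nonneg _) hle 2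
  rw [hznorm] at e3
  have hs : Real.sqrt n ^ 2 = (n:ℝ) := Real.sq_sqrt (by positivity)
  have e5 : (N * ((1-r) * Real.sqrt n))^2 = N^2 * (1-r)^2 * (n:ℝ) := by
    rw [mul_pow, mul_pow, hs]; ring
  rw [e5] at e3
  have hn0 : (0:ℝ) < (n:ℝ) := by linarith
  have e6 : ((n:ℝ)*(1+r)+1-r)^2 ≤ 4 * (N^2 * (1-r)^2) := by
    have h4 : (n:ℝ) * ((n:ℝ)*(1+r)+1-r)^2 ≤ (n:ℝ) * (4 * (N^2 * (1-r)^2)) := by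
      nlinarith
    exact le_of_mul_le_mul_left (by linarith) hn0
  show (n * (1 + r) + 1 - r) / (2 * (1 - r)) ≤ N
  rw [div_le_iff₀ (by linarith : (0:ℝ) < 2 * (1-r))]
  nlinarith [mul_nonneg hN0 (by linarith : (0:ℝ) ≤ 1-r), e6,
    mul_pos hn0 (by linarith : (0:ℝ) < 1+r)]

end Stmt9Aux

theorem stmt9 (n : ℕ) (hn : 1 ≤ n) (r : ℝ) (hr : r ∈ Set.Ioo (0 : ℝ) 1) :
    matNorm (Tmat n r) ≤ 1 ∧ spectrum ℂ (Tmat n r) = {(-r : ℂ)} ∧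
      IsUnit (-(1 : Matrix (Fin n) (Fin n) ℂ) - Tmat n r) ∧
      (n * (1 + r) + 1 - r) / (2 * (1 - r)) ≤
        matNorm (-(1 : Matrix (Fin n) (Fin n) ℂ) - Tmat n r)⁻¹ := by
  obtain ⟨hr0, hr1⟩ := hr
  exact ⟨Stmt9Aux.norm_Tmat_le n r hr0.le hr1.le, Stmt9Aux.spectrum_Tmat n hn r,
    Stmt9Aux.isUnit_B n hn r hr1, Stmt9Aux.inv_norm_ge n hn r hr0 hr1⟩
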